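/- For every n ≥ 2, the n-agent matching instance where agent 1 values item g_1 at 1/n, item g_2 at (n−1)/n and all others at 0, and each agent i ≥ 2 values items g_2,...,g_n at 1/(n−1) each and g_1 at 0, admits an iEF lottery: the lottery that always gives g_1 to agent 1 and assigns items g_2,...,g_n to agents 2,...,n uniformly at random is interim envy-free, and in every matching in its support agent 1's envy toward the holder of g_2 equals 1 − 2/n. -/

import Mathlib

open Finset

lemma card_perm_eq (m : ℕ) (a c : Fin (m+1)) :
    (Finset.univ.filter fun e : Equiv.Perm (Fin (m+1)) => e a = c).card = m.factorial := by
  classical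
  have h1 : (Finset.univ.filter fun e : Equiv.Perm (Fin (m+1)) => e a = c).card
      = Fintype.card {e : Equiv.Perm (Fin (m+1)) // e a = c} :=
    (Fintype.card_subtype _).symm
  have step1 : {e : Equiv.Perm (Fin (m+1)) // e a = c}
      ≃ {f : Equiv.Perm (Fin (m+1)) // f 0 = 0} := by
    refine Equiv.subtypeEquiv
      ((Equiv.mulLeft (Equiv.swap 0 c)).trans (Equiv.mulRight (Equiv.swap (0 : Fin (m+1)) a))) ?_
    intro e
    simp only [Equiv.trans_apply, Equiv.coe_mulLeft, Equiv.coe_mulRight, Equiv.Perm.mul_apply,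
      Equiv.swap_apply_left]
    constructor
    · intro h; rw [h]; exact Equiv.swap_apply_right 0 c
    · intro h
      have := congrArg (Equiv.swap (0 : Fin (m+1)) c) h
      simpa using this
  have step2 : {f : Equiv.Perm (Fin (m+1)) // f 0 = 0} ≃ Equiv.Perm (Fin m) :=
    { toFun := fun f => (Equiv.Perm.decomposeFin f.1).2
      invFun := fun e => ⟨Equiv.Perm.decomposeFin.symm (0, e), by simp⟩
      left_inv := by
        rintro ⟨f, hf⟩
        have hfst : (Equiv.Perm.decomposeFin f).1 = 0 := by
          have := Equiv.Perm.decomposeFin_symm_apply_zero (Equiv.Perm.decomposeFin f).1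
            (Equiv.Perm.decomposeFin f).2
          rw [Prod.mk.eta, Equiv.symm_apply_apply] at this
          rw [← this, hf]
        apply Subtype.ext
        show Equiv.Perm.decomposeFin.symm (0, (Equiv.Perm.decomposeFin f).2) = f
        have : ((0 : Fin (m+1)), (Equiv.Perm.decomposeFin f).2) = Equiv.Perm.decomposeFin f := by
          rw [← hfst]
        rw [this, Equiv.symm_apply_apply]
      right_inv := by intro e; simp }
  rw [h1, Fintype.card_congr (step1.trans step2), Fintype.card_perm, Fintype.card_fin]

/-- Probability that agent `i` receives item `j` under a lottery `x` over matchings. -/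
def prMatch {n : ℕ} (x : Equiv.Perm (Fin n) → ℝ) (i j : Fin n) : ℝ :=
  ∑ b ∈ Finset.univ.filter (fun b : Equiv.Perm (Fin n) => b i = j), x b

/-- Interim envy-freeness of a lottery over matchings: for all agents `i ≠ k` and every
item `j` received by `i` with positive probability, `v_i(j) ≥ E[v_i(b(k)) | b(i) = j]`
(stated multiplied through by the positive probability `Pr[b(i) = j]`). -/
def MIEF {n : ℕ} (v : Fin n → Fin n → ℝ) (x : Equiv.Perm (Fin n) → ℝ) : Prop :=
  ∀ i k : Fin n, i ≠ k → ∀ j : Fin n, 0 < prMatch x i j →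
    (∑ b ∈ Finset.univ.filter (fun b : Equiv.Perm (Fin n) => b i = j), x b * v i (b k))
      ≤ v i j * prMatch x i j
/-- Valuations of the instance with `n+2` agents and items: agent 1 (index 0) values
item g₁ (index 0) at 1/n, item g₂ (index 1) at (n-1)/n; every other agent values g₁ at 0
and every other item at 1/(n-1).  Here the number of agents is `n+2`. -/
noncomputable def v6 (n : ℕ) : Fin (n+2) → Fin (n+2) → ℝ := fun i j =>
  if (i : ℕ) = 0 then
    (if (j : ℕ) = 0 then 1 / ((n : ℝ) + 2)
     else if (j : ℕ) = 1 then ((n : ℝ) + 1) / ((n : ℝ) + 2)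
     else 0)
  else
    (if (j : ℕ) = 0 then 0 else 1 / ((n : ℝ) + 1))

/-- The lottery giving item g₁ to agent 1 and assigning the remaining items uniformly at
random to the remaining agents: probability 1/(n-1)! on each matching fixing 0. -/
noncomputable def lot6 (n : ℕ) : Equiv.Perm (Fin (n+2)) → ℝ := fun b =>
  if b 0 = 0 then 1 / ((Nat.factorial (n+1) : ℝ)) else 0

lemma lot6_nonneg (n : ℕ) (b : Equiv.Perm (Fin (n+2))) : 0 ≤ lot6 n b := by
  unfold lot6
  split
  · positivity
  · exact le_refl 0

lemma pr00 (n : ℕ) : prMatch (lot6 n) 0 0 = 1 := by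
  unfold prMatch
  have h1 : ∀ b ∈ Finset.univ.filter (fun b : Equiv.Perm (Fin (n+2)) => b 0 = 0),
      lot6 n b = 1 / ((Nat.factorial (n+1) : ℝ)) := by
    intro b hb
    simp only [Finset.mem_filter] at hb
    simp [lot6, hb.2]
  rw [Finset.sum_congr rfl h1, Finset.sum_const, card_perm_eq (n+1) 0 0, nsmul_eq_mul]
  have : ((n+1).factorial : ℝ) ≠ 0 := by exact_mod_cast Nat.factorial_ne_zero (n+1)
  field_simp

/-- the uniform lottery is a genuine lottery, it is interim envy-free,
and in every matching in its support agent 1's envy toward the holder of g₂ equals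
1 - 2/n (with n+2 agents: 1 - 2/(n+2)). -/
theorem max_envy_instance (n : ℕ) :
    (∀ b, 0 ≤ lot6 n b) ∧ (∑ b, lot6 n b = 1) ∧ MIEF (v6 n) (lot6 n) ∧
    (∀ b : Equiv.Perm (Fin (n+2)), 0 < lot6 n b → ∀ k, b k = 1 →
      v6 n 0 (b k) - v6 n 0 (b 0) = 1 - 2 / ((n : ℝ) + 2)) := by
  refine ⟨lot6_nonneg n, ?_, ?_, ?_⟩
  · -- total mass 1
    have h : (∑ b, lot6 n b) = ∑ b ∈ Finset.univ.filter
        (fun b : Equiv.Perm (Fin (n+2)) => b 0 = 0), lot6 n b := by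
      symm
      apply Finset.sum_subset (Finset.filter_subset _ _)
      intro b _ hb
      simp only [Finset.mem_filter, Finset.mem_univ, true_and] at hb
      simp [lot6, hb]
    rw [h]
    exact pr00 n
  · -- MIEF
    intro i k hik j hj
    by_cases hi : i = 0
    · subst hi
      have hj0 : j = 0 := by
        by_contra hcon
        have hz : prMatch (lot6 n) 0 j = 0 := by
          unfold prMatch
          apply Finset.sum_eq_zero
          intro b hb
          simp only [Finset.mem_filter] at hb
          have : b 0 ≠ 0 := by rw [hb.2]; exact hcon
          simp [lot6, this]
        rw [hz] at hj
        exact lt_irrefl 0 hj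
      subst hj0
      have hk0 : k ≠ 0 := Ne.symm hik
      set c : ℝ := 1 / ((Nat.factorial (n+1) : ℝ)) with hc
      have hL : (∑ b ∈ Finset.univ.filter (fun b : Equiv.Perm (Fin (n+2)) => b 0 = 0),
          lot6 n b * v6 n 0 (b k))
          = c * ∑ b ∈ Finset.univ.filter (fun b : Equiv.Perm (Fin (n+2)) => b 0 = 0),
              v6 n 0 (b k) := by
        rw [Finset.mul_sum]
        apply Finset.sum_congr rfl
        intro b hb
        simp only [Finset.mem_filter] at hb
        simp [lot6, hb.2, hc]
      set k' : Fin (n+1) := k.pred hk0 with hk'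
      have hks : k'.succ = k := Fin.succ_pred k hk0
      have hS : (∑ b ∈ Finset.univ.filter (fun b : Equiv.Perm (Fin (n+2)) => b 0 = 0),
          v6 n 0 (b k))
          = (Nat.factorial n : ℝ) * (((n:ℝ)+1)/((n:ℝ)+2)) := by
        rw [Finset.sum_filter]
        rw [← Equiv.sum_comp (Equiv.Perm.decomposeFin.symm :
          (Fin (n+2) × Equiv.Perm (Fin (n+1))) ≃ _)
          (fun b => if b 0 = 0 then v6 n 0 (b k) else 0)]
        rw [Fintype.sum_prod_type]
        simp only [Equiv.Perm.decomposeFin_symm_apply_zero]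
        have hrw : (∑ p : Fin (n+2), ∑ e : Equiv.Perm (Fin (n+1)),
            if p = 0 then v6 n 0 (Equiv.Perm.decomposeFin.symm (p, e) k) else 0)
            = ∑ e : Equiv.Perm (Fin (n+1)),
                v6 n 0 (Equiv.Perm.decomposeFin.symm ((0 : Fin (n+2)), e) k) := by
          rw [Finset.sum_comm]
          apply Finset.sum_congr rfl
          intro e _
          rw [Finset.sum_ite_eq' Finset.univ (0 : Fin (n+2))
            (fun p => v6 n 0 (Equiv.Perm.decomposeFin.symm (p, e) k))]
          simp
        rw [hrw]
        have hterm : ∀ e : Equiv.Perm (Fin (n+1)),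
            v6 n 0 (Equiv.Perm.decomposeFin.symm ((0 : Fin (n+2)), e) k)
            = if e k' = 0 then ((n:ℝ)+1)/((n:ℝ)+2) else 0 := by
          intro e
          rw [← hks, Equiv.Perm.decomposeFin_symm_apply_succ]
          rw [Equiv.swap_self]
          simp only [Equiv.refl_apply]
          unfold v6
          have h1 : ((0 : Fin (n+2)) : ℕ) = 0 := rfl
          have h2 : (((e k').succ : Fin (n+2)) : ℕ) = (e k' : ℕ) + 1 := Fin.val_succ _
          rw [if_pos h1, h2]
          rw [if_neg (Nat.succ_ne_zero _)]
          by_cases h : e k' = 0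
          · rw [if_pos h, if_pos (by rw [h]; rfl)]
          · have hv : (e k' : ℕ) ≠ 0 := fun hh => h (Fin.ext hh)
            rw [if_neg h, if_neg (by omega)]
        rw [Finset.sum_congr rfl (fun e _ => hterm e)]
        rw [← Finset.sum_filter, Finset.sum_const, card_perm_eq n k' 0, nsmul_eq_mul]
      rw [hL, hS, pr00 n]
      have hv00 : v6 n 0 0 = 1 / ((n:ℝ)+2) := by
        unfold v6; norm_num
      rw [hv00]
      have hfs : (Nat.factorial (n+1) : ℝ) = ((n:ℝ)+1) * (Nat.factorial n : ℝ) := by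
        rw [Nat.factorial_succ]; push_cast; ring
      have hnf : (0:ℝ) < (Nat.factorial n : ℝ) := by exact_mod_cast Nat.factorial_pos n
      apply le_of_eq
      rw [hc, hfs]
      have h2 : ((n:ℝ)+2) ≠ 0 := by positivity
      have h1 : ((n:ℝ)+1) ≠ 0 := by positivity
      field_simp
    · -- i ≠ 0
      have hj0 : j ≠ 0 := by
        by_contra hcon
        subst hcon
        have hz : prMatch (lot6 n) i 0 = 0 := by
          unfold prMatch
          apply Finset.sum_eq_zero
          intro b hb
          simp only [Finset.mem_filter] at hb
          have hb0 : b 0 ≠ 0 := by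
            intro h
            exact hi (b.injective (hb.2.trans h.symm))
          simp [lot6, hb0]
        rw [hz] at hj
        exact lt_irrefl 0 hj
      have hiv : (i : ℕ) ≠ 0 := fun h => hi (Fin.ext h)
      have hjv : (j : ℕ) ≠ 0 := fun h => hj0 (Fin.ext h)
      have hvij : v6 n i j = 1 / ((n:ℝ)+1) := by
        unfold v6; rw [if_neg hiv, if_neg hjv]
      unfold prMatch
      rw [Finset.mul_sum]
      apply Finset.sum_le_sum
      intro b _
      rw [mul_comm (v6 n i j)]
      apply mul_le_mul_of_nonneg_left _ (lot6_nonneg n b)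
      rw [hvij]
      unfold v6
      rw [if_neg hiv]
      split
      · positivity
      · exact le_refl _
  · -- envy value
    intro b hb k hk
    have hb0 : b 0 = 0 := by
      by_contra h
      simp [lot6, h] at hb
    rw [hk, hb0]
    have h1 : ((1 : Fin (n+2)) : ℕ) = 1 := rfl
    have h0 : ((0 : Fin (n+2)) : ℕ) = 0 := rfl
    unfold v6
    rw [h1, h0]
    norm_num
    have h2 : ((n:ℝ)+2) ≠ 0 := by positivity
    rw [inv_eq_one_div, div_sub_div_same, eq_sub_iff_add_eq, ← add_div,
      div_eq_one_iff_eq h2]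
    ring
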